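/- Let S be a cofibrantly generated model category and (C, D) a pair of small categories. If a morphism η : X → Y in S^C is a D-weak equivalence and both X and Y are D-cofibrant, then η is a C-weak equivalence, i.e. η(c) is a weak equivalence in S for every object c of C. Consequently, the cofibrant replacement functor Q_{C,D} of the model category U_S(C,D) takes D-weak equivalences to C-weak equivalences. -/

import Mathlib

/-! Preliminaries: basic notions of homotopical algebra (lifting properties,
model structures, transfinite compositions, relative cell complexes, smallness,
cofibrant generation) and the relative model structure `U_S(C,D)` on functor
categories, following Balmer–Matthey, "Codescent theory I". -/

universe w v u u₂ u₃

open CategoryTheory Limits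

namespace Codescent

set_option linter.dupNamespace false

section Lifting

variable {M : Type u} [Category.{v} M]

/-- The class of morphisms having the left lifting property with respect to all
morphisms in `K`. -/
def llp (K : MorphismProperty M) : MorphismProperty M :=
  fun _ _ f => ∀ ⦃X Y : M⦄ (g : X ⟶ Y), K g → HasLiftingProperty f g

/-- The class of morphisms having the right lifting property with respect to all
morphisms in `K`. -/
def rlp (K : MorphismProperty M) : MorphismProperty M :=
  fun _ _ g => ∀ ⦃A B : M⦄ (f : A ⟶ B), K f → HasLiftingProperty f g

/-- Intersection of two classes of morphisms. -/
def inter (P Q : MorphismProperty M) : MorphismProperty M :=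
  fun _ _ f => P f ∧ Q f

/-- `f` is a retract of `g` (as objects of the arrow category). -/
def RetractHom {X Y X' Y' : M} (f : X ⟶ Y) (g : X' ⟶ Y') : Prop :=
  ∃ (i : Arrow.mk f ⟶ Arrow.mk g) (r : Arrow.mk g ⟶ Arrow.mk f), i ≫ r = 𝟙 (Arrow.mk f)

/-- The object `c` is a retract of the object `d`. -/
def IsRetractObj (c d : M) : Prop :=
  ∃ (i : c ⟶ d) (r : d ⟶ c), i ≫ r = 𝟙 c

/-- A functorial factorization of every morphism as a morphism in `L` followed by
a morphism in `R`. -/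
structure FunctorialFact (L R : MorphismProperty M) where
  Z : Arrow M ⥤ M
  ι : (Arrow.leftFunc : Arrow M ⥤ M) ⟶ Z
  π : Z ⟶ (Arrow.rightFunc : Arrow M ⥤ M)
  fac : ∀ f : Arrow M, ι.app f ≫ π.app f = f.hom
  mem_left : ∀ f : Arrow M, L (ι.app f)
  mem_right : ∀ f : Arrow M, R (π.app f)

end Lifting

/-- A (Quillen) model structure on a category `M`: classes of weak equivalences,
cofibrations and fibrations satisfying MC2–MC5 (MC1, completeness and
cocompleteness, is imposed separately as `HasLimits`/`HasColimits`). -/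
structure ModelStructure (M : Type u) [Category.{v} M] where
  weq : MorphismProperty M
  cof : MorphismProperty M
  fib : MorphismProperty M
  /-- MC2, two-out-of-three -/
  weq_comp : ∀ {X Y Z : M} (f : X ⟶ Y) (g : Y ⟶ Z), weq f → weq g → weq (f ≫ g)
  weq_cancel_left : ∀ {X Y Z : M} (f : X ⟶ Y) (g : Y ⟶ Z), weq f → weq (f ≫ g) → weq g
  weq_cancel_right : ∀ {X Y Z : M} (f : X ⟶ Y) (g : Y ⟶ Z), weq g → weq (f ≫ g) → weq f
  /-- MC3, closure under retracts -/
  weq_retract : ∀ {X Y X' Y' : M} (f : X ⟶ Y) (g : X' ⟶ Y'), RetractHom f g → weq g → weq f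
  cof_retract : ∀ {X Y X' Y' : M} (f : X ⟶ Y) (g : X' ⟶ Y'), RetractHom f g → cof g → cof f
  fib_retract : ∀ {X Y X' Y' : M} (f : X ⟶ Y) (g : X' ⟶ Y'), RetractHom f g → fib g → fib f
  /-- MC4, lifting -/
  cof_lift : ∀ {A B X Y : M} (f : A ⟶ B) (g : X ⟶ Y),
    cof f → weq g → fib g → HasLiftingProperty f g
  fib_lift : ∀ {A B X Y : M} (f : A ⟶ B) (g : X ⟶ Y),
    weq f → cof f → fib g → HasLiftingProperty f g
  /-- MC5, functorial factorizations -/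
  fact₁ : FunctorialFact (M := M) cof (inter weq fib)
  fact₂ : FunctorialFact (M := M) (inter weq cof) fib

section Transfinite

/-- A well-ordered type (with bottom element and successors), the index for
transfinite compositions (a "λ-sequence" index). -/
structure WOType : Type (w + 1) where
  carrier : Type w
  [lin : LinearOrder carrier]
  [succ : SuccOrder carrier]
  [bot : OrderBot carrier]
  [wf : WellFoundedLT carrier]

attribute [instance] WOType.lin WOType.succ WOType.bot WOType.wf

variable {M : Type u} [Category.{v} M] {N : Type u₂} [Category.{v} N]

/-- The class of pushouts of morphisms of `K`. -/
def pushoutsOf (K : MorphismProperty M) : MorphismProperty M :=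
  fun X Y f => ∃ (A B : M) (g : A ⟶ B) (t : A ⟶ X) (b : B ⟶ Y), K g ∧ IsPushout g t b f

/-- The inclusion functor of `{i // i < j}` into a preorder `J`. -/
def iioIncl {J : Type w} [Preorder J] (j : J) : {i : J // i < j} ⥤ J where
  obj i := i.1
  map {i i'} h := homOfLE (Subtype.coe_le_coe.mpr (leOfHom h))

/-- The cocone on the restriction of `F : J ⥤ M` to `{i // i < j}` with apex `F.obj j`. -/
def iioCocone {J : Type w} [Preorder J] (F : J ⥤ M) (j : J) : Cocone (iioIncl j ⋙ F) where
  pt := F.obj j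
  ι :=
    { app := fun i => F.map (homOfLE i.2.le)
      naturality := fun i i' h => by
        dsimp
        rw [Category.comp_id, ← F.map_comp]
        rfl }

/-- `F : J ⥤ M` is a (continuous) transfinite sequence all of whose successor
maps lie in the class `P`. -/
structure IsChainOf (P : MorphismProperty M) {J : Type w} [LinearOrder J] [SuccOrder J]
    (F : J ⥤ M) : Prop where
  succ_mem : ∀ j : J, ¬ IsMax j → P (F.map (homOfLE (Order.le_succ j)))
  limit_isColimit : ∀ j : J, Order.IsSuccLimit j → Nonempty (IsColimit (iioCocone F j))

/-- The class of relative `K`-cells: transfinite compositions of pushouts of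
morphisms of `K`. -/
def cell (K : MorphismProperty M) : MorphismProperty M :=
  fun X Y f => ∃ (J : WOType.{v}) (F : J.carrier ⥤ M)
    (_ : IsChainOf (pushoutsOf K) F) (c : Cocone F) (_ : IsColimit c)
    (e : X ≅ F.obj ⊥) (e' : c.pt ≅ Y), f = e.hom ≫ c.ι.app ⊥ ≫ e'.hom

/-- A linear order is `κ`-filtered when it has no top element and every subset of
cardinality at most `κ` is bounded above. -/
def KFiltered (κ : Cardinal.{w}) (J : Type w) [LinearOrder J] : Prop :=
  (∀ j : J, ∃ j' : J, j < j') ∧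
    ∀ s : Set J, Cardinal.mk s ≤ κ → ∃ j : J, ∀ i ∈ s, i ≤ j

/-- The object `d` is small relative to the class `K`: for some cardinal `κ`,
morphisms from `d` into the colimit of any `κ`-filtered well-ordered continuous
sequence with successor maps in `K` factor, essentially uniquely, through some
stage of the sequence. -/
def IsSmallRel (d : M) (K : MorphismProperty M) : Prop :=
  ∃ κ : Cardinal.{v}, ∀ (J : WOType.{v}), KFiltered κ J.carrier →
    ∀ (F : J.carrier ⥤ M), IsChainOf K F →
    ∀ (c : Cocone F), IsColimit c →
      (∀ g : d ⟶ c.pt, ∃ (j : J.carrier) (h : d ⟶ F.obj j), h ≫ c.ι.app j = g) ∧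
      (∀ (j j' : J.carrier) (h : d ⟶ F.obj j) (h' : d ⟶ F.obj j'),
        h ≫ c.ι.app j = h' ≫ c.ι.app j' →
          ∃ (k : J.carrier) (l : j ≤ k) (l' : j' ≤ k),
            h ≫ F.map (homOfLE l) = h' ≫ F.map (homOfLE l'))

/-- The model structure `P` is cofibrantly generated, with set of generating
cofibrations `I` and set of generating trivial cofibrations `J`. -/
structure IsCofGen (P : ModelStructure M) (I J : MorphismProperty M) : Prop where
  small_I : ∀ ⦃X Y : M⦄ (f : X ⟶ Y), I f → IsSmallRel X (cell I)
  small_J : ∀ ⦃X Y : M⦄ (f : X ⟶ Y), J f → IsSmallRel X (cell J)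
  fib_eq : P.fib = rlp J
  trivFib_eq : inter P.weq P.fib = rlp I

/-- A functor preserves pushouts. -/
def PreservesPushouts (G : M ⥤ N) : Prop :=
  ∀ ⦃Z X Y P : M⦄ (f : Z ⟶ X) (g : Z ⟶ Y) (inl : X ⟶ P) (inr : Y ⟶ P),
    IsPushout f g inl inr → IsPushout (G.map f) (G.map g) (G.map inl) (G.map inr)

/-- A functor preserves transfinite compositions: it preserves colimits of
diagrams indexed by well-ordered types. -/
def PreservesTransfiniteCompositions (G : M ⥤ N) : Prop :=
  ∀ (J : Type v) [LinearOrder J] [WellFoundedLT J] (F : J ⥤ M) (c : Cocone F),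
    IsColimit c → Nonempty (IsColimit (G.mapCocone c))

/-- The image `{G(f) | f ∈ K}` of a class of morphisms under a functor. -/
def strictImage (G : M ⥤ N) (K : MorphismProperty M) : MorphismProperty N :=
  fun _ _ g => ∃ (A B : M) (f : A ⟶ B), K f ∧ Arrow.mk (G.map f) = Arrow.mk g

end Transfinite

section CofRep

variable {M : Type u} [Category.{v} M]

/-- The cofibrant replacement of `X` given by the functorial factorization of
`∅ ⟶ X`. -/
noncomputable def cofRep (P : ModelStructure M) [HasInitial M] (X : M) : M :=
  P.fact₁.Z.obj (Arrow.mk (initial.to X))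

/-- The canonical trivial fibration `QX ⟶ X` from the cofibrant replacement. -/
noncomputable def cofRepHom (P : ModelStructure M) [HasInitial M] (X : M) :
    cofRep P X ⟶ X :=
  P.fact₁.π.app (Arrow.mk (initial.to X))

/-- The functor `X ↦ (∅ ⟶ X)` to the arrow category. -/
noncomputable def toArrowInit (M : Type u) [Category.{v} M] [HasInitial M] : M ⥤ Arrow M where
  obj X := Arrow.mk (initial.to X)
  map {X Y} f := Arrow.homMk (u := 𝟙 _) (v := f) (by apply initial.hom_ext)

/-- The cofibrant replacement functor of the model structure `P`. -/
noncomputable def qFunctor (P : ModelStructure M) [HasInitial M] : M ⥤ M :=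
  toArrowInit M ⋙ P.fact₁.Z

end CofRep

section FunctorCat

variable {S : Type u} [Category.{v} S]

/-- The class of morphisms in `S^C` that belong objectwise on `D` to the class `P`;
for `P` the weak equivalences (resp. fibrations) of a model structure these are
the `D`-weak equivalences (resp. the `D`-fibrations). -/
def objProp {C : Type v} [SmallCategory C] (P : MorphismProperty S) (D : Set C) :
    MorphismProperty (C ⥤ S) :=
  fun _ _ η => ∀ d ∈ D, P (η.app d)

/-- Trivial `D`-fibrations in `S^C`. -/
def dTrivFib {C : Type v} [SmallCategory C] (P : ModelStructure S) (D : Set C) :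
    MorphismProperty (C ⥤ S) :=
  inter (objProp P.weq D) (objProp P.fib D)

/-- `D`-cofibrations in `S^C`: the morphisms having the left lifting property with
respect to all trivial `D`-fibrations. -/
def dCof {C : Type v} [SmallCategory C] (P : ModelStructure S) (D : Set C) :
    MorphismProperty (C ⥤ S) :=
  llp (dTrivFib P D)

variable [HasColimits S]

/-- `D`-cofibrant objects of `S^C`. -/
def dCofibrant {C : Type v} [SmallCategory C] (P : ModelStructure S) (D : Set C)
    (X : C ⥤ S) : Prop :=
  dCof P D (initial.to X)

/-- The model structure `U_S(C,D)` on `S^C`: a model structure whose weak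
equivalences are the `D`-weak equivalences, whose fibrations are the
`D`-fibrations and whose cofibrations are the `D`-cofibrations. -/
structure RelStructure (P : ModelStructure S) (C : Type v) [SmallCategory C] (D : Set C) where
  N : ModelStructure (C ⥤ S)
  weq_eq : N.weq = objProp P.weq D
  fib_eq : N.fib = objProp P.fib D
  cof_eq : N.cof = dCof P D

/-- `X` satisfies `D`-codescent at `c`: the cofibrant replacement morphism
`Q_{C,D} X ⟶ X` in `U_S(C,D)` is a weak equivalence at `c`. -/
def CodescentAt {C : Type v} [SmallCategory C] (P : ModelStructure S) {D : Set C}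
    (U : RelStructure P C D) (X : C ⥤ S) (c : C) : Prop :=
  P.weq ((cofRepHom U.N X).app c)

/-- `X` satisfies `D`-codescent: the cofibrant replacement morphism
`Q_{C,D} X ⟶ X` is a `C`-weak equivalence. -/
def Codescent {C : Type v} [SmallCategory C] (P : ModelStructure S) {D : Set C}
    (U : RelStructure P C D) (X : C ⥤ S) : Prop :=
  ∀ c : C, CodescentAt P U X c

/-- The coproduct property for weak equivalences. -/
def CoproductProperty (P : ModelStructure S) : Prop :=
  ∀ (ι : Type v) (X Y : ι → S) (f : ∀ i, X i ⟶ Y i),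
    (∀ i, P.weq (f i)) ↔ P.weq (Limits.Sigma.map f)

end FunctorCat

section Pairs

variable {A : Type v} [SmallCategory A] {C : Type v} [SmallCategory C]

/-- Two subsets of objects are retract equivalent. -/
def RetractEquiv (D D' : Set C) : Prop :=
  (∀ d ∈ D, ∃ d' ∈ D', IsRetractObj d d') ∧ (∀ d' ∈ D', ∃ d ∈ D, IsRetractObj d' d)

/-- `Φ : (A,B) ⟶ (C,D)` is left glossy. -/
def LeftGlossy (Φ : A ⥤ C) (B : Set A) : Prop :=
  ∀ b ∈ B, ∃ (ι : Type v) (tgt : ι → A) (β : ∀ i, Φ.obj b ⟶ Φ.obj (tgt i)),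
    (∀ i, tgt i ∈ B) ∧
      ∀ (a : A) (α : Φ.obj b ⟶ Φ.obj a),
        ∃! p : (i : ι) × (tgt i ⟶ a), β p.1 ≫ Φ.map p.2 = α

/-- `Φ : (A,B) ⟶ (C,D)` is right glossy. -/
def RightGlossy (Φ : A ⥤ C) (B : Set A) : Prop :=
  ∀ b ∈ B, ∃ (ι : Type v) (src : ι → A) (β : ∀ j, Φ.obj (src j) ⟶ Φ.obj b),
    (∀ j, src j ∈ B) ∧
      ∀ (a : A) (α : Φ.obj a ⟶ Φ.obj b),
        ∃! p : (j : ι) × (a ⟶ src j), Φ.map p.2 ≫ β p.1 = α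

/-- A subset of objects is left absorbant: the source of any morphism whose
target lies in the subset also lies in the subset. -/
def LeftAbsorbant (D : Set C) : Prop :=
  ∀ ⦃c c' : C⦄, (c ⟶ c') → c' ∈ D → c ∈ D

end Pairs

end Codescent
open Codescent

section Aux

variable {M : Type u₂} [Category.{v} M]

/-- If `f = i ≫ p` and `f` lifts against `p`, then `f` is a retract of `i`. -/
lemma retract_of_lift {X Y Z : M} (f : X ⟶ Y) (i : X ⟶ Z) (p : Z ⟶ Y)
    (fac : i ≫ p = f) (h : HasLiftingProperty f p) : RetractHom f i := by
  haveI := h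
  have sq : CommSq i f p (𝟙 Y) := ⟨by rw [fac, Category.comp_id]⟩
  refine ⟨Arrow.homMk (u := 𝟙 X) (v := sq.lift) ?_,
    Arrow.homMk (u := 𝟙 X) (v := p) ?_, ?_⟩
  · simp [sq.fac_left]
  · simp [fac]
  · ext <;> simp [sq.fac_right]

/-- Identities are weak equivalences. -/
lemma weq_id (P : ModelStructure M) (X : M) : P.weq (𝟙 X) := by
  have fac := P.fact₁.fac (Arrow.mk (𝟙 X))
  have hR := P.fact₁.mem_right (Arrow.mk (𝟙 X))
  refine P.weq_retract (𝟙 X) (P.fact₁.π.app (Arrow.mk (𝟙 X))) ?_ hR.1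
  exact ⟨Arrow.homMk (u := P.fact₁.ι.app (Arrow.mk (𝟙 X))) (v := 𝟙 X) (by exact fac.trans (Category.comp_id (𝟙 X)).symm),
    Arrow.homMk (u := P.fact₁.π.app (Arrow.mk (𝟙 X))) (v := 𝟙 X) (by rfl),
    by ext; exacts [fac, Category.comp_id _]⟩

/-- A morphism with the left lifting property against all fibrations is a
trivial cofibration. -/
lemma weq_cof_of_llp_fib (P : ModelStructure M) {X Y : M} (f : X ⟶ Y)
    (h : ∀ ⦃A B : M⦄ (g : A ⟶ B), P.fib g → HasLiftingProperty f g) :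
    P.weq f ∧ P.cof f := by
  have fac := P.fact₂.fac (Arrow.mk f)
  have hl := P.fact₂.mem_left (Arrow.mk f)
  have hr := P.fact₂.mem_right (Arrow.mk f)
  have hret : RetractHom f (P.fact₂.ι.app (Arrow.mk f)) :=
    retract_of_lift f _ _ fac (h _ hr)
  exact ⟨P.weq_retract _ _ hret hl.1, P.cof_retract _ _ hret hl.2⟩

/-- A morphism with the left lifting property against all trivial fibrations is a
cofibration. -/
lemma cof_of_llp_trivFib (P : ModelStructure M) {X Y : M} (f : X ⟶ Y)
    (h : ∀ ⦃A B : M⦄ (g : A ⟶ B), P.weq g → P.fib g → HasLiftingProperty f g) :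
    P.cof f := by
  have fac := P.fact₁.fac (Arrow.mk f)
  have hl := P.fact₁.mem_left (Arrow.mk f)
  have hr := P.fact₁.mem_right (Arrow.mk f)
  have hret : RetractHom f (P.fact₁.ι.app (Arrow.mk f)) :=
    retract_of_lift f _ _ fac (h _ hr.1 hr.2)
  exact P.cof_retract _ _ hret hl

/-- A product of morphisms with the right lifting property against `f` again has
the right lifting property against `f`. -/
lemma piMap_lift {A B X Y : M} (f : X ⟶ Y) (g : A ⟶ B) (ι : Type w)
    [HasProductsOfShape ι M] [HasLiftingProperty f g] :
    HasLiftingProperty f (Pi.lift fun i : ι => Pi.π (fun _ : ι => A) i ≫ g) := by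
  constructor
  intro u v sq
  have sqi : ∀ i : ι,
      CommSq (u ≫ Pi.π (fun _ : ι => A) i) f g (v ≫ Pi.π (fun _ : ι => B) i) := by
    intro i
    constructor
    have h1 : (Pi.lift fun i : ι => Pi.π (fun _ : ι => A) i ≫ g) ≫
        Pi.π (fun _ : ι => B) i = Pi.π (fun _ : ι => A) i ≫ g := by simp
    rw [Category.assoc, ← h1, ← Category.assoc, sq.w, Category.assoc]
  exact CommSq.HasLift.mk'
    { l := Pi.lift fun i => (sqi i).lift
      fac_left := by
        apply limit.hom_ext
        rintro ⟨i⟩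
        simpa using (sqi i).fac_left
      fac_right := by
        apply limit.hom_ext
        rintro ⟨i⟩
        simpa using (sqi i).fac_right }

/-- `coprod.inl` lifts against anything the inclusion of the initial object into
`Y` lifts against. -/
lemma inl_lift [HasInitial M] [HasBinaryCoproducts M] (X Y : M) {A B : M} (g : A ⟶ B)
    [hY : HasLiftingProperty (initial.to Y) g] :
    HasLiftingProperty (coprod.inl : X ⟶ X ⨿ Y) g := by
  constructor
  intro u v sq
  have sq2 : CommSq (initial.to A) (initial.to Y) g (coprod.inr ≫ v) :=
    ⟨initial.hom_ext _ _⟩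
  exact CommSq.HasLift.mk'
    { l := coprod.desc u sq2.lift
      fac_left := by exact coprod.inl_desc _ _
      fac_right := by
        apply coprod.hom_ext
        · exact (coprod.inl_desc_assoc _ _ _).trans sq.w
        · exact (coprod.inr_desc_assoc _ _ _).trans sq2.fac_right }

/-- `coprod.inr` lifts against anything the inclusion of the initial object into
`X` lifts against. -/
lemma inr_lift [HasInitial M] [HasBinaryCoproducts M] (X Y : M) {A B : M} (g : A ⟶ B)
    [hX : HasLiftingProperty (initial.to X) g] :
    HasLiftingProperty (coprod.inr : Y ⟶ X ⨿ Y) g := by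
  constructor
  intro u v sq
  have sq2 : CommSq (initial.to A) (initial.to X) g (coprod.inl ≫ v) :=
    ⟨initial.hom_ext _ _⟩
  exact CommSq.HasLift.mk'
    { l := coprod.desc sq2.lift u
      fac_left := by exact coprod.inr_desc _ _
      fac_right := by
        apply coprod.hom_ext
        · exact (coprod.inl_desc_assoc _ _ _).trans sq2.fac_right
        · exact (coprod.inr_desc_assoc _ _ _).trans sq.w }

/-- Ken Brown's factorization: a weak equivalence between cofibrant objects
factors as a trivial cofibration followed by a weak equivalence admitting a
section which is a trivial cofibration. -/
lemma kenBrown [HasInitial M] [HasBinaryCoproducts M] (N : ModelStructure M)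
    {X Y : M} (η : X ⟶ Y) (hη : N.weq η)
    (hX : ∀ ⦃A B : M⦄ (g : A ⟶ B), N.weq g → N.fib g →
      HasLiftingProperty (initial.to X) g)
    (hY : ∀ ⦃A B : M⦄ (g : A ⟶ B), N.weq g → N.fib g →
      HasLiftingProperty (initial.to Y) g) :
    ∃ (Z : M) (a : X ⟶ Z) (b : Y ⟶ Z) (p : Z ⟶ Y),
      a ≫ p = η ∧ b ≫ p = 𝟙 Y ∧ (N.weq a ∧ N.cof a) ∧ (N.weq b ∧ N.cof b) := by
  set φ : X ⨿ Y ⟶ Y := coprod.desc η (𝟙 Y) with hφ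
  have fac : N.fact₁.ι.app (Arrow.mk φ) ≫ N.fact₁.π.app (Arrow.mk φ) = φ :=
    N.fact₁.fac _
  have hi : N.cof (N.fact₁.ι.app (Arrow.mk φ)) := N.fact₁.mem_left _
  have hp := N.fact₁.mem_right (Arrow.mk φ)
  set i : X ⨿ Y ⟶ _ := N.fact₁.ι.app (Arrow.mk φ)
  set p : _ ⟶ Y := N.fact₁.π.app (Arrow.mk φ)
  have haη : (coprod.inl ≫ i) ≫ p = η := by rw [Category.assoc, show i ≫ p = φ from fac]; exact coprod.inl_desc _ _
  have hb1 : (coprod.inr ≫ i) ≫ p = 𝟙 Y := by rw [Category.assoc, show i ≫ p = φ from fac]; exact coprod.inr_desc _ _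
  have hcofa : N.cof (coprod.inl ≫ i) := by
    apply cof_of_llp_trivFib
    intro A B g hwg hfg
    haveI : HasLiftingProperty (initial.to Y) g := hY g hwg hfg
    haveI : HasLiftingProperty (coprod.inl : X ⟶ X ⨿ Y) g := inl_lift X Y g
    haveI : HasLiftingProperty i g := N.cof_lift i g hi hwg hfg
    infer_instance
  have hcofb : N.cof (coprod.inr ≫ i) := by
    apply cof_of_llp_trivFib
    intro A B g hwg hfg
    haveI : HasLiftingProperty (initial.to X) g := hX g hwg hfg
    haveI : HasLiftingProperty (coprod.inr : Y ⟶ X ⨿ Y) g := inr_lift X Y g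
    haveI : HasLiftingProperty i g := N.cof_lift i g hi hwg hfg
    infer_instance
  have hweqa : N.weq (coprod.inl ≫ i) :=
    N.weq_cancel_right _ p hp.1 (haη ▸ hη)
  have hweqb : N.weq (coprod.inr ≫ i) :=
    N.weq_cancel_right _ p hp.1 (hb1 ▸ weq_id N Y)
  exact ⟨_, coprod.inl ≫ i, coprod.inr ≫ i, p, haη, hb1,
    ⟨hweqa, hcofa⟩, ⟨hweqb, hcofb⟩⟩

end Aux

section Eval

variable {S : Type u} [Category.{v} S] [HasLimits S] [HasColimits S]
variable {C : Type v} [SmallCategory C]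

/-- Evaluating a trivial cofibration of `U_S(C,D)` at any object of `C` yields a
weak equivalence (in fact a trivial cofibration) of `S`. -/
lemma app_weq_of_weq_cof (P : ModelStructure S) {I J : MorphismProperty S}
    (hcg : IsCofGen P I J) {D : Set C} (U : RelStructure P C D)
    {X Y : C ⥤ S} (f : X ⟶ Y) (hw : U.N.weq f) (hc : U.N.cof f) (c : C) :
    P.weq (f.app c) := by
  haveI prods : ∀ a b : C, HasProductsOfShape (a ⟶ b) S := fun _ _ => inferInstance
  have key : ∀ ⦃A B : S⦄ (g : A ⟶ B), P.fib g → HasLiftingProperty (f.app c) g := by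
    intro A B g hg
    have hfib : U.N.fib ((evaluationRightAdjoint S c).map g) := by
      rw [U.fib_eq]
      intro d _
      rw [hcg.fib_eq]
      intro A' B' j hj
      haveI : HasLiftingProperty j g := by
        rw [hcg.fib_eq] at hg
        exact hg j hj
      exact piMap_lift j g (d ⟶ c)
    haveI := U.N.fib_lift f ((evaluationRightAdjoint S c).map g) hw hc hfib
    exact ((evaluationAdjunctionLeft S c).hasLiftingProperty_iff f g).2 this
  exact (weq_cof_of_llp_fib P (f.app c) key).1

end Eval

/-- rigidity of cofibrant objects; the cofibrant replacement takes
`D`-weak equivalences to `C`-weak equivalences (Balmer–Matthey, Prop. 5.1). -/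
theorem statement_5 {S : Type u} [Category.{v} S] [HasLimits S] [HasColimits S]
    (P : ModelStructure S) (I J : MorphismProperty S) (hcg : IsCofGen P I J)
    {C : Type v} [SmallCategory C] (D : Set C) (U : RelStructure P C D) :
    (∀ ⦃X Y : C ⥤ S⦄ (η : X ⟶ Y), objProp P.weq D η →
      dCofibrant P D X → dCofibrant P D Y → objProp P.weq Set.univ η) ∧
    (∀ ⦃X Y : C ⥤ S⦄ (η : X ⟶ Y), objProp P.weq D η →
      objProp P.weq Set.univ ((qFunctor U.N).map η)) := by
  have main1 : ∀ ⦃X Y : C ⥤ S⦄ (η : X ⟶ Y), objProp P.weq D η →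
      dCofibrant P D X → dCofibrant P D Y → objProp P.weq Set.univ η := by
    intro X Y η hη hX hY c _
    have hweqN : U.N.weq η := by rw [U.weq_eq]; exact hη
    have hXl : ∀ ⦃A B : C ⥤ S⦄ (g : A ⟶ B), U.N.weq g → U.N.fib g →
        HasLiftingProperty (initial.to X) g := by
      intro A B g hw hf
      exact hX g ⟨U.weq_eq ▸ hw, U.fib_eq ▸ hf⟩
    have hYl : ∀ ⦃A B : C ⥤ S⦄ (g : A ⟶ B), U.N.weq g → U.N.fib g →
        HasLiftingProperty (initial.to Y) g := by
      intro A B g hw hf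
      exact hY g ⟨U.weq_eq ▸ hw, U.fib_eq ▸ hf⟩
    obtain ⟨Z, a, b, p, hap, hbp, ⟨hwa, hca⟩, ⟨hwb, hcb⟩⟩ :=
      kenBrown U.N η hweqN hXl hYl
    have ha : P.weq (a.app c) := app_weq_of_weq_cof P hcg U a hwa hca c
    have hb : P.weq (b.app c) := app_weq_of_weq_cof P hcg U b hwb hcb c
    have hcompb : b.app c ≫ p.app c = 𝟙 (Y.obj c) := by
      rw [← NatTrans.comp_app, hbp]
      rfl
    have hpc : P.weq (p.app c) :=
      P.weq_cancel_left (b.app c) (p.app c) hb (hcompb ▸ weq_id P (Y.obj c))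
    have hcompa : a.app c ≫ p.app c = η.app c := by
      rw [← NatTrans.comp_app, hap]
    exact hcompa ▸ P.weq_comp _ _ ha hpc
  refine ⟨main1, ?_⟩
  intro X Y η hη
  set φ : Arrow.mk (initial.to X) ⟶ Arrow.mk (initial.to Y) :=
    (toArrowInit (C ⥤ S)).map η with hφ
  have nat : U.N.fact₁.Z.map φ ≫ U.N.fact₁.π.app (Arrow.mk (initial.to Y)) =
      U.N.fact₁.π.app (Arrow.mk (initial.to X)) ≫ η :=
    U.N.fact₁.π.naturality φ
  have hπX := U.N.fact₁.mem_right (Arrow.mk (initial.to X))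
  have hπY := U.N.fact₁.mem_right (Arrow.mk (initial.to Y))
  have hπXw : objProp P.weq D (U.N.fact₁.π.app (Arrow.mk (initial.to X))) :=
    U.weq_eq ▸ hπX.1
  have hπYw : objProp P.weq D (U.N.fact₁.π.app (Arrow.mk (initial.to Y))) :=
    U.weq_eq ▸ hπY.1
  have hQw : objProp P.weq D ((qFunctor U.N).map η) := by
    intro d hd
    have e : ((qFunctor U.N).map η).app d ≫
        (U.N.fact₁.π.app (Arrow.mk (initial.to Y))).app d =
        (U.N.fact₁.π.app (Arrow.mk (initial.to X))).app d ≫ η.app d := by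
      have h := congr_app nat d
      exact h
    refine P.weq_cancel_right _ _ (hπYw d hd) ?_
    rw [e]
    exact P.weq_comp _ _ (hπXw d hd) (hη d hd)
  have hQX : dCofibrant P D ((qFunctor U.N).obj X) := by
    have : initial.to ((qFunctor U.N).obj X) =
        U.N.fact₁.ι.app (Arrow.mk (initial.to X)) := initial.hom_ext _ _
    rw [dCofibrant, this, ← U.cof_eq]
    exact U.N.fact₁.mem_left _
  have hQY : dCofibrant P D ((qFunctor U.N).obj Y) := by
    have : initial.to ((qFunctor U.N).obj Y) =
        U.N.fact₁.ι.app (Arrow.mk (initial.to Y)) := initial.hom_ext _ _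
    rw [dCofibrant, this, ← U.cof_eq]
    exact U.N.fact₁.mem_left _
  exact main1 ((qFunctor U.N).map η) hQw hQX hQY
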